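/- With the notation and hypotheses of the decomposition theorem for rank two tropical cones (K generated by V, rank one covector cells A_T of π_{u*}(K) in ℝ_t^d and B_S of π_{t*}(K_T) in ℝ_u^d), the closure of K ∩ (T₂)^d in the Euclidean topology on ℝ^{2d} is the finite union of ordinary polyhedra cl( K ∩ (T₂)^d ) = ⋃_S ⋃_{T ⊇ S} ( A_T + B_S ), where S runs over the bounded covectors of V and T over the covectors of π_{u*}(V) containing S. -/

import Mathlib

noncomputable section
open scoped Classical

/-- The rank two tropical semifield `T₂`: `ℝ²` with the lexicographic order. -/
abbrev T2 := Lex (ℝ × ℝ)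

/-- `T₂ ∪ {∞}`. -/
abbrev T2i := WithTop T2

variable {d n : ℕ}

/-- The tropical linear combination `min_j (λ_j + v^(j))` of generators. -/
def tropCombN (v : Fin n → Fin d → T2i) (lam : Fin n → T2i) : Fin d → T2i :=
  fun i => Finset.univ.inf fun j => lam j + v j i

/-- The rank two tropical cone generated by `v^(1), …, v^(n)`. -/
def genCone (v : Fin n → Fin d → T2i) : Set (Fin d → T2i) :=
  {x | ∃ lam : Fin n → T2i, x = tropCombN v lam}

/-- The `i`-th sector of `u`:
`Z_i(u) = ⋂_{k, u_k ≠ ∞} {p : p_k − p_i ≤_lex u_k − u_i}`. -/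
def sector (u : Fin d → T2i) (i : Fin d) : Set (Fin d → T2) :=
  {p | ∀ k, (↑(p k - p i) + u i : T2i) ≤ u k}

/-- The covector `S_p` of `p` w.r.t. generators `v`: the bipartite graph on
`[d] ⊔ [n]` with `(i,j) ∈ S_p` iff `v^(j)_i ≠ ∞` and `p ∈ Z_i(v^(j))`. -/
def covector (v : Fin n → Fin d → T2i) (p : Fin d → T2) : Set (Fin d × Fin n) :=
  {ij | v ij.2 ij.1 ≠ ⊤ ∧ p ∈ sector (v ij.2) ij.1}

/-- The covector cell `C_S = {p : S ⊆ S_p}`. -/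
def cellC (v : Fin n → Fin d → T2i) (S : Set (Fin d × Fin n)) : Set (Fin d → T2) :=
  {p | S ⊆ covector v p}

/-- `S` is a covector w.r.t. `v`. -/
def IsCovector (v : Fin n → Fin d → T2i) (S : Set (Fin d × Fin n)) : Prop :=
  ∃ p : Fin d → T2, S = covector v p

/-- A bipartite graph on `[d] ⊔ [n]` is bounded if no node of `[d]` is isolated. -/
def BoundedGraph (S : Set (Fin d × Fin n)) : Prop := ∀ i, ∃ j, (i, j) ∈ S

/-- No node of `[n]` is isolated. -/
def NoIsolatedGen (S : Set (Fin d × Fin n)) : Prop := ∀ j, ∃ i, (i, j) ∈ S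

-- faces of covector cells
def faceC (v : Fin n → Fin d → T2i) (S : Set (Fin d × Fin n))
    (E : Set (Fin d × Fin n × Fin d)) : Set (Fin d → T2) :=
  cellC v S ∩ {p | ∀ e ∈ E, (↑(p e.2.2 - p e.1) + v e.2.1 e.1 : T2i) = v e.2.1 e.2.2}

def IsFaceC (v : Fin n → Fin d → T2i) (S : Set (Fin d × Fin n))
    (F : Set (Fin d → T2)) : Prop :=
  ∃ E : Set (Fin d × Fin n × Fin d),
    (∀ e ∈ E, (e.1, e.2.1) ∈ S ∧ v e.2.1 e.2.2 ≠ ⊤) ∧ F = faceC v S E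

def relintC (v : Fin n → Fin d → T2i) (S : Set (Fin d × Fin n)) : Set (Fin d → T2) :=
  {p | p ∈ cellC v S ∧ ∀ F, IsFaceC v S F → F ≠ cellC v S → p ∉ F}

/-- The pairing `⟨s,p⟩ = ∑ i, s i • p i` between `ℤ^d` and `(T₂)^d`. -/
def pairE (s : Fin d → ℤ) (p : Fin d → T2) : T2 := ∑ i, s i • p i

/-- A lex-polyhedron in `(T₂)^d`. -/
def IsLexPolyE (P : Set (Fin d → T2)) : Prop :=
  ∃ (k : ℕ) (s : Fin k → Fin d → ℤ) (q : Fin k → T2),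
    P = {p | ∀ i, pairE (s i) p ≤ q i}

-- rank one versions
def sector1 (u : Fin d → WithTop ℝ) (i : Fin d) : Set (Fin d → ℝ) :=
  {p | ∀ k, (↑(p k - p i) + u i : WithTop ℝ) ≤ u k}

def covector1 (v : Fin n → Fin d → WithTop ℝ) (p : Fin d → ℝ) :
    Set (Fin d × Fin n) :=
  {ij | v ij.2 ij.1 ≠ ⊤ ∧ p ∈ sector1 (v ij.2) ij.1}

def cell1C (v : Fin n → Fin d → WithTop ℝ) (S : Set (Fin d × Fin n)) :
    Set (Fin d → ℝ) :=
  {p | S ⊆ covector1 v p}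

def IsCovector1 (v : Fin n → Fin d → WithTop ℝ) (S : Set (Fin d × Fin n)) : Prop :=
  ∃ p : Fin d → ℝ, S = covector1 v p

/-- Projection `π_{u*}` onto first coordinates (sending `∞` to `∞`). -/
def projU2 (x : T2i) : WithTop ℝ := WithTop.map (fun a => (ofLex a).1) x

/-- Projection `π_{t*}` onto second coordinates (sending `∞` to `∞`). -/
def projT2 (x : T2i) : WithTop ℝ := WithTop.map (fun a => (ofLex a).2) x

def genU (v : Fin n → Fin d → T2i) : Fin n → Fin d → WithTop ℝ :=
  fun j i => projU2 (v j i)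

/-- The generators `V_T` of `K_T`. -/
def genRestrict (v : Fin n → Fin d → T2i) (T : Set (Fin d × Fin n)) :
    Fin n → Fin d → T2i :=
  fun j i => if (i, j) ∈ T then v j i else ⊤

def genTB (v : Fin n → Fin d → T2i) (T : Set (Fin d × Fin n)) :
    Fin n → Fin d → WithTop ℝ :=
  fun j i => projT2 (genRestrict v T j i)

/-- The identification `(ℝ²)^d ≅ ℝ_t^d × ℝ_u^d = ℝ^{2d}`. -/
def embed2 (p : Fin d → T2) : (Fin d → ℝ) × (Fin d → ℝ) :=
  (fun i => (ofLex (p i)).1, fun i => (ofLex (p i)).2)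

/-- The finite part of the tropical cone generated by `v`, as a subset of `(T₂)^d`. -/
def genConeFin (v : Fin n → Fin d → T2i) : Set (Fin d → T2) :=
  {p | (fun i => (↑(p i) : T2i)) ∈ genCone v}

/-- The ordinary polyhedron `A_T + B_S ⊆ ℝ_t^d × ℝ_u^d = ℝ^{2d}` (orthogonal
Minkowski sum), where `A_T` is the rank one covector cell of `π_{u*}(V)` labelled `T`
and `B_S` the rank one covector cell of `π_{t*}(V_T)` labelled `S`. -/
def coneBlock (v : Fin n → Fin d → T2i) (S T : Set (Fin d × Fin n)) :
    Set ((Fin d → ℝ) × (Fin d → ℝ)) :=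
  {x | x.1 ∈ cell1C (genU v) T ∧ x.2 ∈ cell1C (genTB v T) S}

/-- The index condition: `S` is a bounded covector of `V`, and `T ⊇ S` is a covector
of `π_{u*}(V)`. -/
def coneIdx (v : Fin n → Fin d → T2i) (S T : Set (Fin d × Fin n)) : Prop :=
  IsCovector v S ∧ BoundedGraph S ∧ IsCovector1 (genU v) T ∧ S ⊆ T

section AuxLemmas

open Filter

variable {d n : ℕ}

lemma aux_fst_le_of_le {a b : T2} (h : a ≤ b) : (ofLex a).1 ≤ (ofLex b).1 := by
  rcases (Prod.Lex.le_iff (x := a) (y := b)).1 h with h' | h'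
  · exact le_of_lt h'
  · exact le_of_eq h'.1

lemma aux_snd_le_of_le {a b : T2} (h : a ≤ b) (he : (ofLex a).1 = (ofLex b).1) :
    (ofLex a).2 ≤ (ofLex b).2 := by
  rcases (Prod.Lex.le_iff (x := a) (y := b)).1 h with h' | h'
  · exact absurd he (ne_of_lt h')
  · exact h'.2

lemma aux_ofLex_add (x y : T2) : ofLex (x + y) = ofLex x + ofLex y := rfl
lemma aux_ofLex_sub (x y : T2) : ofLex (x - y) = ofLex x - ofLex y := rfl

lemma aux_mem_covector1_iff {v1 : Fin n → Fin d → WithTop ℝ} {q : Fin d → ℝ}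
    {i : Fin d} {j : Fin n} :
    (i, j) ∈ covector1 v1 q ↔
      ∃ a : ℝ, v1 j i = ↑a ∧ ∀ k (b : ℝ), v1 j k = ↑b → q k - q i + a ≤ b := by
  constructor
  · rintro ⟨hne, hsec⟩
    obtain ⟨a, ha⟩ := WithTop.ne_top_iff_exists.1 hne
    refine ⟨a, ha.symm, fun k b hb => ?_⟩
    have h := hsec k
    rw [← ha, hb, ← WithTop.coe_add, WithTop.coe_le_coe] at h
    exact h
  · rintro ⟨a, ha, h⟩
    refine ⟨by simp [ha], fun k => ?_⟩
    rcases eq_or_ne (v1 j k) ⊤ with hv | hv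
    · rw [hv]; exact le_top
    · obtain ⟨b, hb⟩ := WithTop.ne_top_iff_exists.1 hv
      rw [ha, ← hb, ← WithTop.coe_add, WithTop.coe_le_coe]
      exact h k b hb.symm

lemma aux_genU_coe {v : Fin n → Fin d → T2i} {i : Fin d} {j : Fin n} {c : T2}
    (h : v j i = ↑c) : genU v j i = ↑((ofLex c).1) := by
  simp [genU, projU2, h]

lemma aux_genU_eq_coe {v : Fin n → Fin d → T2i} {i : Fin d} {j : Fin n} {a : ℝ}
    (h : genU v j i = ↑a) : ∃ c : T2, v j i = ↑c ∧ (ofLex c).1 = a := by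
  rcases eq_or_ne (v j i) ⊤ with hv | hv
  · rw [show genU v j i = ⊤ by simp [genU, projU2, hv]] at h
    exact absurd h (by simp)
  · obtain ⟨c, hc⟩ := WithTop.ne_top_iff_exists.1 hv
    refine ⟨c, hc.symm, ?_⟩
    rw [aux_genU_coe hc.symm] at h
    exact_mod_cast h

lemma aux_genTB_coe {v : Fin n → Fin d → T2i} {T : Set (Fin d × Fin n)}
    {i : Fin d} {j : Fin n} {c : T2} (hT : (i, j) ∈ T) (h : v j i = ↑c) :
    genTB v T j i = ↑((ofLex c).2) := by
  simp [genTB, genRestrict, projT2, hT, h]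

lemma aux_genTB_eq_coe {v : Fin n → Fin d → T2i} {T : Set (Fin d × Fin n)}
    {i : Fin d} {j : Fin n} {b : ℝ} (h : genTB v T j i = ↑b) :
    (i, j) ∈ T ∧ ∃ c : T2, v j i = ↑c ∧ (ofLex c).2 = b := by
  by_cases hT : (i, j) ∈ T
  · refine ⟨hT, ?_⟩
    rcases eq_or_ne (v j i) ⊤ with hv | hv
    · rw [show genTB v T j i = ⊤ by simp [genTB, genRestrict, projT2, hT, hv]] at h
      exact absurd h (by simp)
    · obtain ⟨c, hc⟩ := WithTop.ne_top_iff_exists.1 hv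
      refine ⟨c, hc.symm, ?_⟩
      rw [aux_genTB_coe hT hc.symm] at h
      exact_mod_cast h
  · rw [show genTB v T j i = ⊤ by simp [genTB, genRestrict, projT2, hT]] at h
    exact absurd h (by simp)

end AuxLemmas
section AuxConstruct

variable {d n : ℕ}

lemma aux_construct (v : Fin n → Fin d → T2i) (S T : Set (Fin d × Fin n))
    (q r : Fin d → ℝ)
    (hq : q ∈ cell1C (genU v) T)
    (hr : r ∈ cell1C (genTB v T) S)
    (hS : BoundedGraph S)
    (htie : ∀ i k j (a b : ℝ), (i, j) ∈ T → genU v j i = ↑a → genU v j k = ↑b →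
      q k - q i + a = b → (k, j) ∈ T) :
    (q, r) ∈ embed2 '' genConeFin v := by
  classical
  -- S-pairs lie in T and have finite generator entries
  have hSmem : ∀ {i : Fin d} {j : Fin n}, (i, j) ∈ S → (i, j) ∈ T ∧ ∃ c : T2, v j i = ↑c := by
    intro i j hij
    obtain ⟨b, hb, -⟩ := aux_mem_covector1_iff.1 (hr hij)
    obtain ⟨hT, c, hc, -⟩ := aux_genTB_eq_coe hb
    exact ⟨hT, c, hc⟩
  -- rank one inequality from hq
  have hqc : ∀ (i j k : _) (c e : T2), (i, j) ∈ T → v j i = ↑c → v j k = ↑e →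
      q k - q i + (ofLex c).1 ≤ (ofLex e).1 := by
    intro i j k c e hT hc he
    obtain ⟨a, ha, h⟩ := aux_mem_covector1_iff.1 (hq hT)
    have h1 : (↑a : WithTop ℝ) = ↑((ofLex c).1) := by rw [← ha, aux_genU_coe hc]
    have h1' : a = (ofLex c).1 := by exact_mod_cast h1
    rw [← h1']
    exact h k _ (aux_genU_coe he)
  -- rank one inequality from hr
  have hrc : ∀ (i j k : _) (c e : T2), (i, j) ∈ S → (k, j) ∈ T → v j i = ↑c → v j k = ↑e →
      r k - r i + (ofLex c).2 ≤ (ofLex e).2 := by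
    intro i j k c e hij hkT hc he
    obtain ⟨b, hb, h⟩ := aux_mem_covector1_iff.1 (hr hij)
    have h1 : (↑b : WithTop ℝ) = ↑((ofLex c).2) := by rw [← hb, aux_genTB_coe (hSmem hij).1 hc]
    have h1' : b = (ofLex c).2 := by exact_mod_cast h1
    rw [← h1']
    exact h k _ (aux_genTB_coe hkT he)
  -- equalities on S/T pairs for one generator
  have hqe : ∀ (i j i0 : _) (c c0 : T2), (i, j) ∈ T → (i0, j) ∈ T → v j i = ↑c → v j i0 = ↑c0 →
      q i0 - (ofLex c0).1 + (ofLex c).1 = q i := by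
    intro i j i0 c c0 hT hT0 hc hc0
    have h1 := hqc i0 j i c0 c hT0 hc0 hc
    have h2 := hqc i j i0 c c0 hT hc hc0
    linarith
  have hre : ∀ (i j i0 : _) (c c0 : T2), (i, j) ∈ S → (i0, j) ∈ S → v j i = ↑c → v j i0 = ↑c0 →
      r i0 - (ofLex c0).2 + (ofLex c).2 = r i := by
    intro i j i0 c c0 hi hi0 hc hc0
    have h1 := hrc i0 j i c0 c hi0 (hSmem hi).1 hc0 hc
    have h2 := hrc i j i0 c c0 hi (hSmem hi0).1 hc hc0
    linarith
  -- the lambdas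
  set L : Fin n → T2i := fun j =>
    if h : ∃ i, (i, j) ∈ S then
      WithTop.map (fun c => toLex (q h.choose, r h.choose) - c) (v j h.choose)
    else ⊤ with hL
  have hLval : ∀ (j : Fin n) (h : ∃ i, (i, j) ∈ S) (c0 : T2), v j h.choose = ↑c0 →
      L j = ↑(toLex (q h.choose, r h.choose) - c0) := by
    intro j h c0 hc0
    simp only [hL, dif_pos h, hc0, WithTop.map_coe]
  have key : ∀ i, (Finset.univ.inf fun j => L j + v j i) = ↑(toLex (q i, r i)) := by
    intro i
    apply le_antisymm
    · obtain ⟨j, hij⟩ := hS i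
      have hex : ∃ i', (i', j) ∈ S := ⟨i, hij⟩
      obtain ⟨hT0, c0, hc0⟩ := hSmem hex.choose_spec
      obtain ⟨hTi, c, hc⟩ := hSmem hij
      have hle : (Finset.univ.inf fun j => L j + v j i) ≤ L j + v j i :=
        Finset.inf_le (Finset.mem_univ j)
      rw [hLval j hex c0 hc0, hc, ← WithTop.coe_add] at hle
      refine hle.trans_eq ?_
      have hofLex : ofLex (toLex (q hex.choose, r hex.choose) - c0 + c) = (q i, r i) := by
        rw [aux_ofLex_add, aux_ofLex_sub, ofLex_toLex]
        have h1 : q hex.choose - (ofLex c0).1 + (ofLex c).1 = q i :=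
          hqe i j hex.choose c c0 hTi hT0 hc hc0
        have h2 : r hex.choose - (ofLex c0).2 + (ofLex c).2 = r i :=
          hre i j hex.choose c c0 hij hex.choose_spec hc hc0
        exact Prod.ext (by simpa using h1) (by simpa using h2)
      rw [show toLex (q hex.choose, r hex.choose) - c0 + c = toLex (q i, r i) from
        congrArg toLex hofLex]
    · refine Finset.le_inf fun j _ => ?_
      by_cases hex : ∃ i', (i', j) ∈ S
      · obtain ⟨hT0, c0, hc0⟩ := hSmem hex.choose_spec
        rcases eq_or_ne (v j i) ⊤ with hv | hv
        · rw [hv, add_top]; exact le_top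
        · obtain ⟨c, hc⟩ := WithTop.ne_top_iff_exists.1 hv
          rw [hLval j hex c0 hc0, ← hc, ← WithTop.coe_add, WithTop.coe_le_coe]
          have h1 : q i ≤ q hex.choose - (ofLex c0).1 + (ofLex c).1 := by
            have := hqc hex.choose j i c0 c hT0 hc0 hc.symm
            linarith
          refine (Prod.Lex.le_iff (x := toLex (q i, r i))
            (y := toLex ((q hex.choose, r hex.choose) - ofLex c0 + ofLex c))).2 ?_
          rcases lt_or_eq_of_le h1 with hlt | heq
          · left; simpa using hlt
          · right
            refine ⟨by simpa using heq, ?_⟩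
            have hiT : (i, j) ∈ T := htie hex.choose i j (ofLex c0).1 (ofLex c).1 hT0
              (aux_genU_coe hc0) (aux_genU_coe hc.symm) (by linarith)
            have h2 := hrc hex.choose j i c0 c hex.choose_spec hiT hc0 hc.symm
            simpa using (by linarith : r i ≤ r hex.choose - (ofLex c0).2 + (ofLex c).2)
      · rw [hL]
        simp only [dif_neg hex, top_add]
        exact le_top
  refine ⟨fun i => toLex (q i, r i), ⟨L, ?_⟩, ?_⟩
  · funext i
    exact (key i).symm
  · rfl

end AuxConstruct
section AuxClosure

open Filter

variable {d n : ℕ}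

lemma aux_block_subset (v : Fin n → Fin d → T2i) (S T : Set (Fin d × Fin n))
    (h : coneIdx v S T) :
    coneBlock v S T ⊆ closure (embed2 '' genConeFin v) := by
  obtain ⟨-, hSb, ⟨q0, hT⟩, -⟩ := h
  rintro ⟨q, r⟩ ⟨hq, hr⟩
  have hcov : ∀ {i : Fin d} {j : Fin n}, (i, j) ∈ T →
      (i, j) ∈ covector1 (genU v) q ∧ (i, j) ∈ covector1 (genU v) q0 := by
    intro i j hij
    exact ⟨hq hij, by rw [hT] at hij; exact hij⟩
  have hmem : ∀ θ : ℝ, 0 < θ → θ ≤ 1 →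
      ((fun i => q i + θ * (q0 i - q i)), r) ∈ embed2 '' genConeFin v := by
    intro θ hθ0 hθ1
    have hq' : (fun i => q i + θ * (q0 i - q i)) ∈ cell1C (genU v) T := by
      rintro ⟨i, j⟩ hij
      obtain ⟨h1, h2⟩ := hcov hij
      obtain ⟨a, ha, hc1⟩ := aux_mem_covector1_iff.1 h1
      obtain ⟨a', ha', hc2⟩ := aux_mem_covector1_iff.1 h2
      have haa : a' = a := by
        rw [ha] at ha'; exact_mod_cast ha'.symm
      rw [haa] at hc2
      refine aux_mem_covector1_iff.2 ⟨a, ha, fun k b hb => ?_⟩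
      have e1 := hc1 k b hb
      have e2 := hc2 k b hb
      nlinarith
    have htie : ∀ i k j (a b : ℝ), (i, j) ∈ T → genU v j i = ↑a → genU v j k = ↑b →
        (q k + θ * (q0 k - q k)) - (q i + θ * (q0 i - q i)) + a = b → (k, j) ∈ T := by
      intro i k j a b hij ha hb heq
      obtain ⟨h1, h2⟩ := hcov hij
      obtain ⟨a₁, ha₁, hc1⟩ := aux_mem_covector1_iff.1 h1
      obtain ⟨a₂, ha₂, hc2⟩ := aux_mem_covector1_iff.1 h2
      have ha₁' : a₁ = a := by rw [ha] at ha₁; exact_mod_cast ha₁.symm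
      have ha₂' : a₂ = a := by rw [ha] at ha₂; exact_mod_cast ha₂.symm
      rw [ha₁'] at hc1; rw [ha₂'] at hc2
      have e1 := hc1 k b hb
      have e2 := hc2 k b hb
      have e2' : q0 k - q0 i + a = b := by nlinarith
      rw [hT]
      refine aux_mem_covector1_iff.2 ⟨b, hb, fun m b' hb' => ?_⟩
      have := hc2 m b' hb'
      linarith
    exact aux_construct v S T _ r hq' hr hSb htie
  have hcont : Continuous fun θ : ℝ => ((fun i => q i + θ * (q0 i - q i)), r) := by
    refine Continuous.prodMk ?_ continuous_const
    exact continuous_pi fun i => continuous_const.add (continuous_id.mul continuous_const)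
  have hzero : (fun i => q i + (0 : ℝ) * (q0 i - q i)) = q := by
    funext i; ring
  have hseq : Tendsto (fun m : ℕ => ((fun i => q i + (1 / ((m : ℝ) + 1)) * (q0 i - q i)), r))
      atTop (nhds (q, r)) := by
    have h0 := (hcont.tendsto 0).comp tendsto_one_div_add_atTop_nhds_zero_nat
    rw [show ((fun i => q i + (0 : ℝ) * (q0 i - q i)), r) = (q, r) by rw [hzero]] at h0
    exact h0
  refine mem_closure_of_tendsto hseq (Eventually.of_forall fun m => ?_)
  refine hmem _ (by positivity) ?_
  rw [div_le_one (by positivity)]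
  simp

end AuxClosure
section AuxSubset

variable {d n : ℕ}

lemma aux_image_subset (v : Fin n → Fin d → T2i) :
    embed2 '' genConeFin v ⊆
      ⋃ S : Set (Fin d × Fin n), ⋃ T : Set (Fin d × Fin n),
        ⋃ (_ : coneIdx v S T), coneBlock v S T := by
  rintro x ⟨p, ⟨lam, hp⟩, rfl⟩
  set q : Fin d → ℝ := fun i => (ofLex (p i)).1 with hqdef
  set r : Fin d → ℝ := fun i => (ofLex (p i)).2 with hrdef
  set T : Set (Fin d × Fin n) := covector1 (genU v) q with hTdef
  set S : Set (Fin d × Fin n) := covector v p with hSdef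
  have hST : S ⊆ T := by
    rintro ⟨i, j⟩ ⟨hne, hsec⟩
    obtain ⟨c, hc⟩ := WithTop.ne_top_iff_exists.1 hne
    refine aux_mem_covector1_iff.2 ⟨(ofLex c).1, aux_genU_coe hc.symm, fun k b hb => ?_⟩
    obtain ⟨e, he, hbe⟩ := aux_genU_eq_coe hb
    have hlex : p k - p i + c ≤ e := by
      have h := hsec k
      rw [← hc, he, ← WithTop.coe_add, WithTop.coe_le_coe] at h
      exact h
    have h1 := aux_fst_le_of_le hlex
    rw [aux_ofLex_add, aux_ofLex_sub] at h1
    simp only [Prod.fst_add, Prod.fst_sub] at h1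
    rw [← hbe]
    exact h1
  have hbdd : BoundedGraph S := by
    intro i
    have hpi : (↑(p i) : T2i) = tropCombN v lam i := congrFun hp i
    have hne : (Finset.univ : Finset (Fin n)).Nonempty := by
      rcases (Finset.univ : Finset (Fin n)).eq_empty_or_nonempty with h | h
      · exfalso
        rw [tropCombN, h, Finset.inf_empty] at hpi
        exact WithTop.coe_ne_top hpi
      · exact h
    obtain ⟨j, -, hj⟩ := Finset.exists_mem_eq_inf Finset.univ hne (fun j => lam j + v j i)
    have hji : (↑(p i) : T2i) = lam j + v j i := hpi.trans hj
    rcases eq_or_ne (lam j) ⊤ with hl | hl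
    · exfalso; rw [hl, top_add] at hji; exact WithTop.coe_ne_top hji
    obtain ⟨l, hlv⟩ := WithTop.ne_top_iff_exists.1 hl
    rcases eq_or_ne (v j i) ⊤ with hv | hv
    · exfalso; rw [hv, add_top] at hji; exact WithTop.coe_ne_top hji
    obtain ⟨c, hcv⟩ := WithTop.ne_top_iff_exists.1 hv
    have hpic : p i = l + c := by
      rw [← hlv, ← hcv, ← WithTop.coe_add] at hji
      exact_mod_cast hji
    refine ⟨j, hv, fun k => ?_⟩
    rcases eq_or_ne (v j k) ⊤ with hvk | hvk
    · rw [hvk]; exact le_top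
    obtain ⟨e, hek⟩ := WithTop.ne_top_iff_exists.1 hvk
    have hk : (↑(p k) : T2i) ≤ lam j + v j k := by
      calc (↑(p k) : T2i) = tropCombN v lam k := congrFun hp k
        _ ≤ lam j + v j k := Finset.inf_le (Finset.mem_univ j)
    rw [← hlv, ← hek, ← WithTop.coe_add, WithTop.coe_le_coe] at hk
    rw [← hcv, ← hek, ← WithTop.coe_add, WithTop.coe_le_coe]
    rw [hpic]
    rw [show p k - (l + c) + c = p k - l by abel]
    exact sub_le_iff_le_add'.2 hk
  have hrT : r ∈ cell1C (genTB v T) S := by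
    rintro ⟨i, j⟩ hij
    have hijT := hST hij
    obtain ⟨hne, hsec⟩ := hij
    obtain ⟨c, hc⟩ := WithTop.ne_top_iff_exists.1 hne
    refine aux_mem_covector1_iff.2 ⟨(ofLex c).2, aux_genTB_coe hijT hc.symm, fun k b hb => ?_⟩
    obtain ⟨hkT, e, he, hbe⟩ := aux_genTB_eq_coe hb
    have hlex : p k - p i + c ≤ e := by
      have h := hsec k
      rw [← hc, he, ← WithTop.coe_add, WithTop.coe_le_coe] at h
      exact h
    have h1 := aux_fst_le_of_le hlex
    rw [aux_ofLex_add, aux_ofLex_sub] at h1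
    simp only [Prod.fst_add, Prod.fst_sub] at h1
    obtain ⟨a2, ha2, hcon⟩ := aux_mem_covector1_iff.1 hkT
    have ha2' : a2 = (ofLex e).1 := by
      rw [aux_genU_coe he] at ha2; exact_mod_cast ha2.symm
    rw [ha2'] at hcon
    have h2 := hcon i ((ofLex c).1) (aux_genU_coe hc.symm)
    have heq : (ofLex (p k - p i + c)).1 = (ofLex e).1 := by
      rw [aux_ofLex_add, aux_ofLex_sub]
      simp only [Prod.fst_add, Prod.fst_sub]
      have : q k - q i + (ofLex c).1 = (ofLex e).1 := by linarith
      simpa using this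
    have h3 := aux_snd_le_of_le hlex heq
    rw [aux_ofLex_add, aux_ofLex_sub] at h3
    simp only [Prod.snd_add, Prod.snd_sub] at h3
    rw [← hbe]
    exact h3
  refine Set.mem_iUnion.2 ⟨S, Set.mem_iUnion.2 ⟨T, Set.mem_iUnion.2
    ⟨⟨⟨p, hSdef⟩, hbdd, ⟨q, hTdef⟩, hST⟩, ?_⟩⟩⟩
  exact ⟨fun ij hij => hij, hrT⟩

lemma aux_closed_cell1C (v1 : Fin n → Fin d → WithTop ℝ) (S : Set (Fin d × Fin n)) :
    IsClosed (cell1C v1 S) := by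
  have hrw : cell1C v1 S = ⋂ ij ∈ S, {p : Fin d → ℝ | ij ∈ covector1 v1 p} := by
    ext p
    simp only [cell1C, Set.mem_setOf_eq, Set.subset_def, Set.mem_iInter]
  rw [hrw]
  refine isClosed_iInter fun ij => isClosed_iInter fun _ => ?_
  obtain ⟨i, j⟩ := ij
  rcases eq_or_ne (v1 j i) ⊤ with hv | hv
  · convert isClosed_empty
    ext p
    simp [covector1, hv]
  · obtain ⟨a, ha⟩ := WithTop.ne_top_iff_exists.1 hv
    have hrw2 : {p : Fin d → ℝ | (i, j) ∈ covector1 v1 p} =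
        ⋂ k, {p : Fin d → ℝ | ∀ b : ℝ, v1 j k = ↑b → p k - p i + a ≤ b} := by
      ext p
      rw [Set.mem_setOf_eq, aux_mem_covector1_iff, Set.mem_iInter]
      constructor
      · rintro ⟨a', ha', h⟩ k
        have : a' = a := by rw [← ha] at ha'; exact_mod_cast ha'.symm
        intro b hb
        rw [← this]
        exact h k b hb
      · intro h
        exact ⟨a, ha.symm, fun k b hb => (h k) b hb⟩
    rw [hrw2]
    refine isClosed_iInter fun k => ?_
    rcases eq_or_ne (v1 j k) ⊤ with hvk | hvk
    · convert isClosed_univ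
      ext p
      simp [hvk]
    · obtain ⟨b, hb⟩ := WithTop.ne_top_iff_exists.1 hvk
      have hrw3 : {p : Fin d → ℝ | ∀ b' : ℝ, v1 j k = ↑b' → p k - p i + a ≤ b'} =
          {p : Fin d → ℝ | p k - p i + a ≤ b} := by
        ext p
        constructor
        · intro h; exact h b hb.symm
        · intro h b' hb'
          have : b' = b := by rw [← hb] at hb'; exact_mod_cast hb'.symm
          rw [this]; exact h
      rw [hrw3]
      exact isClosed_le (((continuous_apply k).sub (continuous_apply i)).add
        continuous_const) continuous_const

end AuxSubset
/-- The closure of `K ∩ (T₂)^d` in the Euclidean topology on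
`ℝ^{2d}` is the finite union of ordinary polyhedra
`cl(K ∩ (T₂)^d) = ⋃_S ⋃_{T ⊇ S} (A_T + B_S)` over bounded covectors `S` of `V` and
covectors `T ⊇ S` of `π_{u*}(V)`. -/
theorem cone_closure (d n : ℕ) (v : Fin n → Fin d → T2i) :
    closure (embed2 '' genConeFin v) =
      ⋃ S : Set (Fin d × Fin n), ⋃ T : Set (Fin d × Fin n),
        ⋃ (_ : coneIdx v S T), coneBlock v S T := by
  apply Set.Subset.antisymm
  · apply closure_minimal (aux_image_subset v)
    refine isClosed_iUnion_of_finite fun S => isClosed_iUnion_of_finite fun T => ?_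
    by_cases h : coneIdx v S T
    · rw [show (⋃ (_ : coneIdx v S T), coneBlock v S T) = coneBlock v S T by simp [h]]
      have : coneBlock v S T =
          Prod.fst ⁻¹' cell1C (genU v) T ∩ Prod.snd ⁻¹' cell1C (genTB v T) S := rfl
      rw [this]
      exact ((aux_closed_cell1C _ _).preimage continuous_fst).inter
        ((aux_closed_cell1C _ _).preimage continuous_snd)
    · rw [show (⋃ (_ : coneIdx v S T), coneBlock v S T) = (∅ : Set _) by simp [h]]
      exact isClosed_empty
  · exact Set.iUnion_subset fun S => Set.iUnion_subset fun T => Set.iUnion_subset fun h =>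
      aux_block_subset v S T h
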